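/- Let α ∈ (1,2] and c > 0, so c_α = c^{1−α}/(α−1) > 0. Define L : ℝ → ℝ by L(x) = −c_α·F(1 + x/c_α; α−1) + c_α for x ≥ −c_α, and L(x) = −x for x < −c_α, where F(z;b) = ∫₀^z 1/(1 + t^{1/b}) dt. Then L is differentiable at every x ∈ ℝ and L'(x) = s_{α,c}(x) − 1 for all x ∈ ℝ; i.e., L is the virtual SIGTRON-induced loss function for α ∈ (1,2]. -/

import Mathlib

/-- `c_α = c^{1−α}/(α−1)` (real power). -/
noncomputable def cA (α c : ℝ) : ℝ := c ^ (1 - α) / (α - 1)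

/-- SIGTRON: extended asymmetric sigmoid with Perceptron. -/
noncomputable def sigtron (α c : ℝ) (x : ℝ) : ℝ :=
  if α = 1 then 1 / (1 + Real.exp (-x))
  else if α < 1 then
    if x ≤ -(cA α c) then 1 / (1 + (1 + x / cA α c) ^ ((1 : ℝ) / (1 - α))) else 1
  else
    if -(cA α c) < x then 1 / (1 + (1 + x / cA α c) ^ ((1 : ℝ) / (1 - α))) else 0

/-- `F(z;b) = ∫₀^z 1/(1 + t^{1/b}) dt`. -/
noncomputable def Fint (z b : ℝ) : ℝ := ∫ t in (0 : ℝ)..z, 1 / (1 + t ^ ((1 : ℝ) / b))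


/-- Virtual SIGTRON-induced loss for `α ∈ (1,2]`:
`L(x) = −c_α·F(1+x/c_α; α−1) + c_α` for `x ≥ −c_α`, and `L(x) = −x` otherwise. -/
noncomputable def lossGT (α c : ℝ) (x : ℝ) : ℝ :=
  if -(cA α c) ≤ x then -(cA α c) * Fint (1 + x / cA α c) (α - 1) + cA α c else -x

lemma sigtron_denom_pos {b : ℝ} (hb : 0 < b) (hb1 : b ≤ 1) {t : ℝ} (ht : -1 < t) :
    0 < 1 + t ^ ((1 : ℝ) / b) := by
  rcases le_or_gt 0 t with h | h
  · have := Real.rpow_nonneg h ((1 : ℝ) / b)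
    linarith
  · have habs : |t| < 1 := by rw [abs_of_neg h]; linarith
    have h1 : |t ^ ((1 : ℝ) / b)| ≤ |t| ^ ((1 : ℝ) / b) := Real.abs_rpow_le_abs_rpow t _
    have h2 : |t| ^ ((1 : ℝ) / b) < 1 :=
      Real.rpow_lt_one (abs_nonneg t) habs (by positivity)
    have h3 := (abs_lt.mp (lt_of_le_of_lt h1 h2)).1
    linarith

lemma sigtron_cont_f {b : ℝ} (hb : 0 < b) (hb1 : b ≤ 1) :
    ContinuousOn (fun t : ℝ => 1 / (1 + t ^ ((1 : ℝ) / b))) (Set.Ioi (-1 : ℝ)) := by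
  have hcont : Continuous fun t : ℝ => t ^ ((1 : ℝ) / b) :=
    continuous_iff_continuousAt.mpr fun t =>
      Real.continuousAt_rpow_const t _ (Or.inr (by positivity))
  exact ContinuousOn.div continuousOn_const
    (continuous_const.add hcont).continuousOn
    (fun t ht => (sigtron_denom_pos hb hb1 ht).ne')

lemma sigtron_ftc {b : ℝ} (hb : 0 < b) (hb1 : b ≤ 1) {z : ℝ} (hz : 0 ≤ z) :
    HasDerivAt (fun z => Fint z b) (1 / (1 + z ^ ((1 : ℝ) / b))) z := by
  have hopen : IsOpen (Set.Ioi (-1 : ℝ)) := isOpen_Ioi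
  have hcont := sigtron_cont_f hb hb1
  have hz1 : z ∈ Set.Ioi (-1 : ℝ) := by simp only [Set.mem_Ioi]; linarith
  apply intervalIntegral.integral_hasDerivAt_right
  · apply ContinuousOn.intervalIntegrable
    apply hcont.mono
    intro t ht
    rw [Set.uIcc_of_le hz] at ht
    exact Set.mem_Ioi.mpr (by linarith [ht.1])
  · exact hcont.stronglyMeasurableAtFilter hopen z hz1
  · exact hcont.continuousAt (hopen.mem_nhds hz1)

/-- For `α ∈ (1,2]` and `c > 0`, the function `L = lossGT α c` is
differentiable at every `x ∈ ℝ` with `L'(x) = s_{α,c}(x) − 1`. -/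
theorem sigtron_stmt12 (α c : ℝ) (hα : α ∈ Set.Ioc (1 : ℝ) 2) (hc : 0 < c) (x : ℝ) :
    HasDerivAt (lossGT α c) (sigtron α c x - 1) x := by
  obtain ⟨hα1, hα2⟩ := hα
  set a := cA α c with ha_def
  have ha : 0 < a := by
    have h1 : (0 : ℝ) < c ^ (1 - α) := Real.rpow_pos_of_pos hc _
    have h2 : (0 : ℝ) < α - 1 := by linarith
    exact div_pos h1 h2
  set b := α - 1 with hb_def
  have hb : 0 < b := by simp only [hb_def]; linarith
  have hb1 : b ≤ 1 := by simp only [hb_def]; linarith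
  have hαne : ¬ α = 1 := by linarith
  have hαlt : ¬ α < 1 := by linarith
  -- derivative of the smooth branch
  have hg : ∀ y : ℝ, -a ≤ y →
      HasDerivAt (fun y : ℝ => -a * Fint (1 + y / a) b + a)
        (-(1 / (1 + (1 + y / a) ^ ((1 : ℝ) / b)))) y := by
    intro y hy
    have hz : (0 : ℝ) ≤ 1 + y / a := by
      have : (-1 : ℝ) ≤ y / a := by rw [le_div_iff₀ ha]; linarith
      linarith
    have h1 : HasDerivAt (fun y : ℝ => 1 + y / a) (1 / a) y := by
      simpa [one_div] using ((hasDerivAt_id y).div_const a).const_add 1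
    have h2 := (sigtron_ftc hb hb1 hz).comp y h1
    have h3 := (h2.const_mul (-a)).add_const a
    refine h3.congr_deriv ?_
    symm
    rw [mul_comm (1 / (1 + (1 + y / a) ^ ((1 : ℝ) / b))), ← mul_assoc, mul_one_div,
      mul_one_div, div_div, mul_comm a, ← div_div, div_right_comm, neg_div a a,
      div_self ha.ne', neg_div]
  rcases lt_trichotomy x (-a) with hx | hx | hx
  · -- Perceptron branch
    have heq : lossGT α c =ᶠ[nhds x] fun y => -y := by
      filter_upwards [isOpen_Iio.mem_nhds (Set.mem_Iio.mpr hx)] with y hy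
      simp only [Set.mem_Iio] at hy
      simp [lossGT, ← ha_def, not_le.mpr hy]
    have hd : HasDerivAt (fun y : ℝ => -y) (-1 : ℝ) x := (hasDerivAt_id x).neg
    have := hd.congr_of_eventuallyEq heq
    have hs : sigtron α c x - 1 = -1 := by
      simp [sigtron, hαne, hαlt, ← ha_def, not_lt.mpr hx.le]
    rw [hs]
    exact this
  · -- junction point x = -a
    subst hx
    have hFint0 : Fint (1 + -a / a) b = 0 := by
      have : (1 : ℝ) + -a / a = 0 := by field_simp; norm_num
      rw [this, Fint, intervalIntegral.integral_same]
    -- left: L = -y on Iic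
    have hleft : HasDerivWithinAt (lossGT α c) (-1 : ℝ) (Set.Iic (-a)) (-a) := by
      have hd : HasDerivWithinAt (fun y : ℝ => -y) (-1 : ℝ) (Set.Iic (-a)) (-a) :=
        ((hasDerivAt_id (-a)).neg).hasDerivWithinAt
      apply hd.congr
      · intro y hy
        rcases eq_or_lt_of_le (Set.mem_Iic.mp hy) with h | h
        · subst h
          simp [lossGT, ← ha_def, hb_def, hFint0]
          exact Or.inr hFint0
        · simp [lossGT, ← ha_def, not_le.mpr h]
      · simp [lossGT, ← ha_def, hb_def, hFint0]
        exact Or.inr hFint0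
    -- right: L = smooth branch on Ici
    have hright : HasDerivWithinAt (lossGT α c) (-1 : ℝ) (Set.Ici (-a)) (-a) := by
      have hd := (hg (-a) le_rfl).hasDerivWithinAt (s := Set.Ici (-a))
      have hval : -(1 / (1 + (1 + -a / a) ^ ((1 : ℝ) / b))) = (-1 : ℝ) := by
        have h0 : (1 : ℝ) + -a / a = 0 := by field_simp; norm_num
        rw [h0, Real.zero_rpow (by positivity)]
        norm_num
      rw [hval] at hd
      apply hd.congr
      · intro y hy
        simp [lossGT, ← ha_def, hb_def, Set.mem_Ici.mp hy]
      · simp [lossGT, ← ha_def, hb_def]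
    have hunion := hleft.union hright
    rw [Set.Iic_union_Ici, hasDerivWithinAt_univ] at hunion
    have hs : sigtron α c (-a) - 1 = -1 := by
      simp [sigtron, hαne, hαlt, ← ha_def]
    rw [hs]
    exact hunion
  · -- smooth branch
    have heq : lossGT α c =ᶠ[nhds x] fun y => -a * Fint (1 + y / a) b + a := by
      filter_upwards [isOpen_Ioi.mem_nhds (Set.mem_Ioi.mpr hx)] with y hy
      simp only [Set.mem_Ioi] at hy
      simp [lossGT, ← ha_def, hb_def, hy.le]
    have hd := (hg x hx.le).congr_of_eventuallyEq heq
    have hw : (0 : ℝ) < 1 + x / a := by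
      have : (-1 : ℝ) < x / a := by rw [lt_div_iff₀ ha]; linarith
      linarith
    have hu : (0 : ℝ) < (1 + x / a) ^ ((1 : ℝ) / b) := Real.rpow_pos_of_pos hw _
    have hval : sigtron α c x - 1 = -(1 / (1 + (1 + x / a) ^ ((1 : ℝ) / b))) := by
      have hexp : (1 : ℝ) / (1 - α) = -(1 / b) := by
        have h : (1 : ℝ) - α = -(α - 1) := by ring
        rw [hb_def, h, div_neg]
      have hrw : (1 + x / a) ^ ((1 : ℝ) / (1 - α)) = ((1 + x / a) ^ ((1 : ℝ) / b))⁻¹ := by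
        rw [hexp, Real.rpow_neg hw.le]
      simp only [sigtron, hαne, hαlt, if_neg, if_false, if_pos hx, ← ha_def, hrw]
      set u := (1 + x / a) ^ ((1 : ℝ) / b) with hu_def
      have h1 : (1 : ℝ) + u⁻¹ ≠ 0 := by positivity
      have h2 : (1 : ℝ) + u ≠ 0 := by positivity
      field_simp
      ring
    rw [hval]
    exact hd
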